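/- Let X be a finite set of points on the unit sphere S² and ψ(X) the minimum pairwise angular distance. If a, b, x, y ∈ X are four distinct points with dist(a,b) = dist(x,y) = ψ(X), then the minimal geodesic arcs ab and xy do not cross in their interiors. -/

import Mathlib

open Real
open scoped RealInnerProductSpace

/-- Angular (geodesic) distance between points of the unit sphere `S² ⊂ ℝ³`. -/
noncomputable def sphDist (x y : EuclideanSpace ℝ (Fin 3)) : ℝ :=
  Real.arccos ⟪x, y⟫

/-- `p` is an interior point of the minimal geodesic arc from `a` to `b`. -/
def InteriorOfArc (a b p : EuclideanSpace ℝ (Fin 3)) : Prop :=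
  ‖p‖ = 1 ∧ p ≠ a ∧ p ≠ b ∧ sphDist a p + sphDist p b = sphDist a b

section Aux

local notation "E" => EuclideanSpace ℝ (Fin 3)

lemma sphDist_comm (x y : E) : sphDist x y = sphDist y x := by
  unfold sphDist; rw [real_inner_comm]

lemma sphDist_nonneg (x y : E) : 0 ≤ sphDist x y := Real.arccos_nonneg _

lemma sphDist_le_pi (x y : E) : sphDist x y ≤ π := Real.arccos_le_pi _

lemma inner_le_one' {x y : E} (hx : ‖x‖ = 1) (hy : ‖y‖ = 1) : ⟪x, y⟫ ≤ 1 := by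
  have := real_inner_le_norm x y
  rwa [hx, hy, one_mul] at this

lemma neg_one_le_inner' {x y : E} (hx : ‖x‖ = 1) (hy : ‖y‖ = 1) : -1 ≤ ⟪x, y⟫ := by
  have := abs_real_inner_le_norm x y
  rw [hx, hy, one_mul] at this
  linarith [neg_abs_le ⟪x, y⟫]

lemma cos_sphDist {x y : E} (hx : ‖x‖ = 1) (hy : ‖y‖ = 1) :
    Real.cos (sphDist x y) = ⟪x, y⟫ :=
  Real.cos_arccos (neg_one_le_inner' hx hy) (inner_le_one' hx hy)

lemma sphDist_pos {x y : E} (hx : ‖x‖ = 1) (hy : ‖y‖ = 1) (h : x ≠ y) :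
    0 < sphDist x y :=
  Real.arccos_pos.2 ((inner_lt_one_iff_real_of_norm_eq_one hx hy).2 h)

/-- norm of the component of `x` orthogonal to unit vector `p`. -/
lemma norm_orth {x p : E} (hx : ‖x‖ = 1) (hp : ‖p‖ = 1) :
    ‖x - ⟪x, p⟫ • p‖ = Real.sin (sphDist x p) := by
  have hpp : ⟪p, p⟫ = (1 : ℝ) := by
    rw [real_inner_self_eq_norm_sq, hp]; norm_num
  have hsq : ‖x - ⟪x, p⟫ • p‖ ^ 2 = 1 - ⟪x, p⟫ ^ 2 := by
    rw [← real_inner_self_eq_norm_sq]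
    simp only [inner_sub_left, inner_sub_right, real_inner_smul_left,
      real_inner_smul_right, hpp, real_inner_comm p x]
    have : ⟪x, x⟫ = (1 : ℝ) := by rw [real_inner_self_eq_norm_sq, hx]; norm_num
    rw [this]; ring
  rw [sphDist, Real.sin_arccos, ← hsq, Real.sqrt_sq (norm_nonneg _)]

lemma inner_orth {a p x : E} (hp : ‖p‖ = 1) :
    ⟪a - ⟪a, p⟫ • p, x - ⟪x, p⟫ • p⟫ = ⟪a, x⟫ - ⟪a, p⟫ * ⟪x, p⟫ := by
  have hpp : ⟪p, p⟫ = (1 : ℝ) := by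
    rw [real_inner_self_eq_norm_sq, hp]; norm_num
  simp only [inner_sub_left, inner_sub_right, real_inner_smul_left,
    real_inner_smul_right, hpp, real_inner_comm p x]
  ring

/-- Spherical triangle inequality (under the hypothesis that the sum of the
two angles is at most `π`). -/
lemma sph_triangle {a p x : E} (hda : ‖a‖ = 1) (hp : ‖p‖ = 1) (hdx : ‖x‖ = 1)
    (hsum : sphDist a p + sphDist p x ≤ π) :
    sphDist a x ≤ sphDist a p + sphDist p x := by
  rw [sphDist_comm p x] at hsum ⊢
  set α := sphDist a p with hα
  set γ := sphDist x p with hγ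
  have hca : Real.cos α = ⟪a, p⟫ := cos_sphDist hda hp
  have hcx : Real.cos γ = ⟪x, p⟫ := cos_sphDist hdx hp
  have hna : ‖a - ⟪a, p⟫ • p‖ = Real.sin α := norm_orth hda hp
  have hnx : ‖x - ⟪x, p⟫ • p‖ = Real.sin γ := norm_orth hdx hp
  have hcs : -(‖a - ⟪a, p⟫ • p‖ * ‖x - ⟪x, p⟫ • p‖) ≤ ⟪a - ⟪a, p⟫ • p, x - ⟪x, p⟫ • p⟫ := by
    have := abs_real_inner_le_norm (a - ⟪a, p⟫ • p) (x - ⟪x, p⟫ • p)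
    linarith [neg_abs_le ⟪a - ⟪a, p⟫ • p, x - ⟪x, p⟫ • p⟫]
  rw [hna, hnx, inner_orth hp] at hcs
  have h1 : Real.cos (α + γ) ≤ ⟪a, x⟫ := by
    rw [Real.cos_add, hca, hcx]; linarith
  calc sphDist a x = Real.arccos ⟪a, x⟫ := rfl
    _ ≤ Real.arccos (Real.cos (α + γ)) := by
        unfold Real.arccos
        have := Real.monotone_arcsin h1
        linarith
    _ = α + γ :=
        Real.arccos_cos (add_nonneg (sphDist_nonneg _ _) (sphDist_nonneg _ _)) hsum

/-- Equality case: the components of `a` and `x` orthogonal to `p` are antiparallel. -/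
lemma sph_eq_case {a p x : E} (hda : ‖a‖ = 1) (hp : ‖p‖ = 1) (hdx : ‖x‖ = 1)
    (hsum : sphDist a p + sphDist p x ≤ π)
    (heq : sphDist a x = sphDist a p + sphDist p x) :
    ‖x - ⟪x, p⟫ • p‖ • (a - ⟪a, p⟫ • p) + ‖a - ⟪a, p⟫ • p‖ • (x - ⟪x, p⟫ • p) = 0 := by
  rw [sphDist_comm p x] at hsum heq
  set α := sphDist a p with hα
  set γ := sphDist x p with hγ
  set qa := a - ⟪a, p⟫ • p with hqa
  set qx := x - ⟪x, p⟫ • p with hqx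
  have hax : ⟪a, x⟫ = Real.cos (α + γ) := by
    have := congrArg Real.cos heq
    rwa [cos_sphDist hda hdx] at this
  have hq : ⟪qa, qx⟫ = ⟪a, x⟫ - ⟪a, p⟫ * ⟪x, p⟫ := inner_orth hp
  have hna : ‖qa‖ = Real.sin α := norm_orth hda hp
  have hnx : ‖qx‖ = Real.sin γ := norm_orth hdx hp
  have hca : Real.cos α = ⟪a, p⟫ := cos_sphDist hda hp
  have hcx : Real.cos γ = ⟪x, p⟫ := cos_sphDist hdx hp
  have hinner : ⟪qa, qx⟫ = -(‖qa‖ * ‖qx‖) := by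
    rw [hq, hax, Real.cos_add, hna, hnx, ← hca, ← hcx]; ring
  have hzero : ‖‖qx‖ • qa + ‖qa‖ • qx‖ ^ 2 = 0 := by
    rw [norm_add_sq_real, real_inner_smul_left, real_inner_smul_right, hinner,
      norm_smul, norm_smul, Real.norm_eq_abs, Real.norm_eq_abs,
      abs_of_nonneg (norm_nonneg _), abs_of_nonneg (norm_nonneg _)]
    ring
  have := pow_eq_zero_iff (n := 2) (by norm_num) |>.1 hzero
  exact norm_eq_zero.1 this

/-- If two points are at equal distance from `p`, both realizing equality in the
triangle inequality through `p` from the same point `a`, they coincide. -/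
lemma sph_unique {p a x y : E} (hp : ‖p‖ = 1) (hda : ‖a‖ = 1) (hdx : ‖x‖ = 1) (hdy : ‖y‖ = 1)
    (hsx : sphDist a p + sphDist p x ≤ π) (hsy : sphDist a p + sphDist p y ≤ π)
    (hex : sphDist a x = sphDist a p + sphDist p x)
    (hey : sphDist a y = sphDist a p + sphDist p y)
    (hd : sphDist p x = sphDist p y)
    (hapos : 0 < sphDist a p) (haπ : sphDist a p < π) : x = y := by
  have h1 := sph_eq_case hda hp hdx hsx hex
  have h2 := sph_eq_case hda hp hdy hsy hey
  have hna : ‖a - ⟪a, p⟫ • p‖ ≠ 0 := by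
    rw [norm_orth hda hp]
    exact ne_of_gt (Real.sin_pos_of_pos_of_lt_pi hapos haπ)
  have hdx' : sphDist x p = sphDist y p := by
    rw [sphDist_comm x p, sphDist_comm y p, ← hd]
  have hip : ⟪x, p⟫ = ⟪y, p⟫ := by
    rw [← cos_sphDist hdx hp, ← cos_sphDist hdy hp, hdx']
  have hn : ‖x - ⟪x, p⟫ • p‖ = ‖y - ⟪y, p⟫ • p‖ := by
    rw [norm_orth hdx hp, norm_orth hdy hp, hdx']
  have h3 : ‖a - ⟪a, p⟫ • p‖ • (x - ⟪x, p⟫ • p) = ‖a - ⟪a, p⟫ • p‖ • (y - ⟪y, p⟫ • p) := by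
    have e1 : ‖a - ⟪a, p⟫ • p‖ • (x - ⟪x, p⟫ • p) = -(‖x - ⟪x, p⟫ • p‖ • (a - ⟪a, p⟫ • p)) :=
      eq_neg_of_add_eq_zero_right h1
    have e2 : ‖a - ⟪a, p⟫ • p‖ • (y - ⟪y, p⟫ • p) = -(‖y - ⟪y, p⟫ • p‖ • (a - ⟪a, p⟫ • p)) :=
      eq_neg_of_add_eq_zero_right h2
    rw [e1, e2, hn]
  have h4 : x - ⟪x, p⟫ • p = y - ⟪y, p⟫ • p := smul_right_injective _ hna h3
  have : x = (x - ⟪x, p⟫ • p) + ⟪x, p⟫ • p := by abel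
  rw [this, h4, hip]
  abel

end Aux

theorem minimal_arcs_do_not_cross
    (X : Finset (EuclideanSpace ℝ (Fin 3))) (ψ : ℝ)
    (hX : ∀ p ∈ X, ‖p‖ = 1)
    (hψ : ∀ p ∈ X, ∀ q ∈ X, p ≠ q → ψ ≤ sphDist p q)
    (a b x y : EuclideanSpace ℝ (Fin 3))
    (ha : a ∈ X) (hb : b ∈ X) (hx : x ∈ X) (hy : y ∈ X)
    (hab : sphDist a b = ψ) (hxy : sphDist x y = ψ)
    (h1 : a ≠ b) (h2 : a ≠ x) (h3 : a ≠ y) (h4 : b ≠ x) (h5 : b ≠ y)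
    (h6 : x ≠ y) :
    ¬ ∃ p : EuclideanSpace ℝ (Fin 3), InteriorOfArc a b p ∧ InteriorOfArc x y p := by
  rintro ⟨p, ⟨hp1, hpa, hpb, hpab⟩, ⟨-, hpx, hpy, hpxy⟩⟩
  have hua := hX a ha
  have hub := hX b hb
  have hux := hX x hx
  have huy := hX y hy
  have hαβ : sphDist a p + sphDist p b = ψ := by rw [hpab, hab]
  have hγδ : sphDist x p + sphDist p y = ψ := by rw [hpxy, hxy]
  have hψπ : ψ ≤ π := hab ▸ sphDist_le_pi a b
  have hαpos : 0 < sphDist a p := sphDist_pos hua hp1 (fun h => hpa h.symm)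
  have hβpos : 0 < sphDist p b := sphDist_pos hp1 hub hpb
  have hγpos : 0 < sphDist x p := sphDist_pos hux hp1 (fun h => hpx h.symm)
  have hδpos : 0 < sphDist p y := sphDist_pos hp1 huy hpy
  -- squeezing: if the detour through p between two distinct points of X has
  -- length at most ψ, then it is a geodesic of length exactly ψ.
  have squeeze : ∀ u v : EuclideanSpace ℝ (Fin 3), u ∈ X → v ∈ X → u ≠ v →
      sphDist u p + sphDist p v ≤ ψ →
      sphDist u v = sphDist u p + sphDist p v ∧ sphDist u p + sphDist p v = ψ := by
    intro u v hu hv huv hsum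
    have tri := sph_triangle (hX u hu) hp1 (hX v hv) (hsum.trans hψπ)
    have low := hψ u hu v hv huv
    constructor <;> linarith
  have cxp : sphDist p x = sphDist x p := sphDist_comm p x
  have cyp : sphDist p y = sphDist y p := sphDist_comm p y
  have cap : sphDist p a = sphDist a p := sphDist_comm p a
  have cbp : sphDist p b = sphDist b p := sphDist_comm p b
  have cxa : sphDist x a = sphDist a x := sphDist_comm x a
  have cxb : sphDist x b = sphDist b x := sphDist_comm x b
  have cya : sphDist y a = sphDist a y := sphDist_comm y a
  have cyb : sphDist y b = sphDist b y := sphDist_comm y b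
  by_cases hA : sphDist a p + sphDist p x ≤ ψ
  · -- case A : equality  d(a,x) = α + γ = ψ
    obtain ⟨eax, sax⟩ := squeeze a x ha hx h2 hA
    by_cases hA1 : sphDist a p + sphDist p y ≤ ψ
    · -- shared vertex a ⇒ x = y
      obtain ⟨eay, say⟩ := squeeze a y ha hy h3 hA1
      exact h6 (sph_unique hp1 hua hux huy (by linarith) (by linarith)
        eax eay (by linarith) hαpos (by linarith))
    · -- then β + γ ≤ ψ ;  shared vertex x ⇒ a = b
      push_neg at hA1
      have hA2 : sphDist x p + sphDist p b ≤ ψ := by linarith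
      obtain ⟨exb, sxb⟩ := squeeze x b hx hb (fun h => h4 h.symm) hA2
      have eax' : sphDist x a = sphDist x p + sphDist p a := by linarith
      exact h1 (sph_unique hp1 hux hua hub (by linarith) (by linarith)
        eax' exb (by linarith) hγpos (by linarith))
  · -- case B : β + δ ≤ ψ, equality d(b,y) = β + δ = ψ
    push_neg at hA
    have hB : sphDist b p + sphDist p y ≤ ψ := by linarith
    obtain ⟨eby, sby⟩ := squeeze b y hb hy h5 hB
    by_cases hB1 : sphDist b p + sphDist p x ≤ ψ
    · -- shared vertex b ⇒ x = y
      obtain ⟨ebx, sbx⟩ := squeeze b x hb hx h4 hB1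
      exact h6 (sph_unique hp1 hub hux huy (by linarith) (by linarith)
        ebx eby (by linarith) (by linarith) (by linarith))
    · -- then α + δ ≤ ψ ; shared vertex y ⇒ a = b
      push_neg at hB1
      have hB2 : sphDist a p + sphDist p y ≤ ψ := by linarith
      obtain ⟨eay, say⟩ := squeeze a y ha hy h3 hB2
      have eya : sphDist y a = sphDist y p + sphDist p a := by linarith
      have eyb : sphDist y b = sphDist y p + sphDist p b := by linarith
      exact h1 (sph_unique hp1 huy hua hub (by linarith) (by linarith)
        eya eyb (by linarith) (by linarith) (by linarith))
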